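/- If p : ℝ → ℝ solves p' = p² - 1 with p(0) = 0, then p(s) = -tanh(s); consequently the generating curve of an invariant surface in Sol with extrinsic Gaussian curvature K_ext = 0 (not a leaf of the totally geodesic foliation) is α(s) = (0, tanh(s), -log(cosh(s))), i.e. z(s) = -log(cosh s) and y(s) = tanh(s) satisfy z' = p and y' = e^z·√(1-p²). -/

import Mathlib

open Real

lemma const_of_deriv_zero {f : ℝ → ℝ} (h : ∀ s, HasDerivAt f 0 s) (s : ℝ) : f s = f 0 :=
  is_const_of_deriv_eq_zero (fun x => (h x).differentiableAt) (fun x => (h x).deriv) s 0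

lemma hd_tanh (s : ℝ) : HasDerivAt Real.tanh (1 / Real.cosh s ^ 2) s := by
  have h := (Real.hasDerivAt_sinh s).div (Real.hasDerivAt_cosh s)
      (ne_of_gt (Real.cosh_pos s))
  have he : (Real.cosh s * Real.cosh s - Real.sinh s * Real.sinh s) / Real.cosh s ^ 2
      = 1 / Real.cosh s ^ 2 := by
    rw [show Real.cosh s * Real.cosh s - Real.sinh s * Real.sinh s
        = Real.cosh s ^ 2 - Real.sinh s ^ 2 by ring, Real.cosh_sq_sub_sinh_sq]
  rw [he] at h
  have ht : Real.tanh = fun x => Real.sinh x / Real.cosh x :=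
    funext Real.tanh_eq_sinh_div_cosh
  rw [ht]
  exact h

theorem stmt_10 (p : ℝ → ℝ) (hp : ∀ s, HasDerivAt p (p s ^ 2 - 1) s) (h0 : p 0 = 0) :
    (∀ s, p s = - tanh s) ∧
    ∀ (z y : ℝ → ℝ),
      (∀ s, HasDerivAt z (p s) s) → z 0 = 0 →
      (∀ s, HasDerivAt y (exp (z s) * sqrt (1 - p s ^ 2)) s) → y 0 = 0 →
      (∀ s, z s = - log (cosh s)) ∧ (∀ s, y s = tanh s) := by
  have hpc : Continuous p := by
    rw [continuous_iff_continuousAt]; exact fun s => (hp s).continuousAt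
  set Z : ℝ → ℝ := fun s => ∫ t in (0:ℝ)..s, p t with hZ
  have hZd : ∀ s, HasDerivAt Z (p s) s := fun s =>
    (hpc.integral_hasStrictDerivAt 0 s).hasDerivAt
  set u : ℝ → ℝ := fun s => p s * Real.cosh s + Real.sinh s with hu
  have hud : ∀ s, HasDerivAt u (p s * u s) s := by
    intro s
    have h1 := ((hp s).mul (Real.hasDerivAt_cosh s)).add (Real.hasDerivAt_sinh s)
    refine h1.congr_deriv ?_
    simp only [hu]; ring
  set v : ℝ → ℝ := fun s => u s * Real.exp (-Z s) with hv
  have hvd : ∀ s, HasDerivAt v 0 s := by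
    intro s
    have h2 := (hud s).mul (((hZd s).neg).exp)
    refine h2.congr_deriv ?_
    ring
  have hu0 : ∀ s, u s = 0 := by
    intro s
    have hc := const_of_deriv_zero hvd s
    have hv0 : v 0 = 0 := by simp [hv, hu, h0]
    rw [hv0] at hc
    have := mul_eq_zero.mp hc
    rcases this with h | h
    · exact h
    · exact absurd h (Real.exp_ne_zero _)
  have hptanh : ∀ s, p s = - Real.tanh s := by
    intro s
    have := hu0 s
    simp only [hu] at this
    rw [Real.tanh_eq_sinh_div_cosh]
    field_simp
    linarith
  refine ⟨hptanh, fun z y hz hz0 hy hy0 => ?_⟩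
  have hzval : ∀ s, z s = - log (cosh s) := by
    have hgd : ∀ s, HasDerivAt (fun s => z s + Real.log (Real.cosh s)) 0 s := by
      intro s
      have hl : HasDerivAt (fun s => Real.log (Real.cosh s))
          (Real.sinh s / Real.cosh s) s :=
        (Real.hasDerivAt_cosh s).log (ne_of_gt (Real.cosh_pos s))
      have := (hz s).add hl
      refine this.congr_deriv ?_
      rw [hptanh s, Real.tanh_eq_sinh_div_cosh]; ring
    intro s
    have := const_of_deriv_zero hgd s
    simp only [hz0, Real.cosh_zero, Real.log_one, add_zero, zero_add] at this
    linarith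
  refine ⟨hzval, ?_⟩
  have hyd : ∀ s, HasDerivAt y (1 / Real.cosh s ^ 2) s := by
    intro s
    have := hy s
    rw [hzval s, hptanh s] at this
    have e1 : Real.exp (-Real.log (Real.cosh s)) = 1 / Real.cosh s := by
      rw [Real.exp_neg, Real.exp_log (Real.cosh_pos s), one_div]
    have e2 : Real.sqrt (1 - (-Real.tanh s) ^ 2) = 1 / Real.cosh s := by
      have : 1 - (-Real.tanh s) ^ 2 = (1 / Real.cosh s) ^ 2 := by
        rw [Real.tanh_eq_sinh_div_cosh]
        have hc := ne_of_gt (Real.cosh_pos s)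
        field_simp
        exact Real.cosh_sq_sub_sinh_sq s
      rw [this, Real.sqrt_sq (by positivity)]
    rw [e1, e2] at this
    convert this using 1
    ring
  intro s
  have hhd : ∀ s, HasDerivAt (fun s => y s - Real.tanh s) 0 s := by
    intro s
    have h3 := (hyd s).sub (hd_tanh s)
    rw [sub_self] at h3
    exact h3
  have := const_of_deriv_zero hhd s
  simp only [hy0, Real.tanh_zero, sub_zero, zero_sub] at this
  linarith
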